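/- Let D ⊂ ℝⁿ be a bounded convex domain with R = max_{p ∈ D} r(p). For every r ∈ (0, R), the intersection of the topological boundary of D_r with D equals the level set {p ∈ D : r(p) = r}. -/
import Mathlib


open scoped RealInnerProductSpace
open Metric MeasureTheory

/-- For a point `p` and a unit vector `v`, the length of the connected component of
`(p + ℝ v) ∩ D` containing `p`, computed as the Lebesgue measure of the corresponding
set of parameters `t` (its connected component containing `0`). -/
noncomputable def segLen {n : ℕ} (D : Set (EuclideanSpace ℝ (Fin n)))
    (p v : EuclideanSpace ℝ (Fin n)) : ℝ :=
  (volume (connectedComponentIn {t : ℝ | p + t • v ∈ D} 0)).toReal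

/-- Inaccessibility of `p` in `D`: the infimum (a minimum, by lower semicontinuity)
of `f_p` over the unit sphere. -/
noncomputable def inacc {n : ℕ} (D : Set (EuclideanSpace ℝ (Fin n)))
    (p : EuclideanSpace ℝ (Fin n)) : ℝ :=
  sInf (segLen D p '' sphere (0 : EuclideanSpace ℝ (Fin n)) 1)

/-- The inaccessibility `R` of `D`: the supremum (for convex `D`, the maximum) of the
inaccessibility function on `D`. -/
noncomputable def Rmax {n : ℕ} (D : Set (EuclideanSpace ℝ (Fin n))) : ℝ :=
  sSup (inacc D '' D)

/-! ### Auxiliary lemmas -/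

lemma segLen_nonneg {n : ℕ} (D : Set (EuclideanSpace ℝ (Fin n)))
    (p v : EuclideanSpace ℝ (Fin n)) : 0 ≤ segLen D p v :=
  ENNReal.toReal_nonneg

lemma inacc_nonneg {n : ℕ} (D : Set (EuclideanSpace ℝ (Fin n)))
    (p : EuclideanSpace ℝ (Fin n)) : 0 ≤ inacc D p :=
  Real.sInf_nonneg fun _ ⟨v, _, hv⟩ => hv ▸ segLen_nonneg D p v

lemma inacc_le_segLen {n : ℕ} (D : Set (EuclideanSpace ℝ (Fin n)))
    (p : EuclideanSpace ℝ (Fin n)) {v : EuclideanSpace ℝ (Fin n)}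
    (hv : v ∈ sphere (0 : EuclideanSpace ℝ (Fin n)) 1) :
    inacc D p ≤ segLen D p v :=
  csInf_le ⟨0, fun _ ⟨w, _, hw⟩ => hw ▸ segLen_nonneg D p w⟩ ⟨v, hv, rfl⟩

/-- volume of a nonempty bounded convex subset of `ℝ`. -/
lemma vol_convex {s : Set ℝ} (hne : s.Nonempty) (hconv : Convex ℝ s)
    (hbdd : Bornology.IsBounded s) :
    volume s = ENNReal.ofReal (sSup s - sInf s) := by
  have hb : BddBelow s := hbdd.bddBelow
  have ha : BddAbove s := hbdd.bddAbove
  have h1 : Set.Ioo (sInf s) (sSup s) ⊆ s :=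
    (IsConnected.Ioo_csInf_csSup_subset ⟨hne, hconv.isPreconnected⟩ hb ha)
  have h2 : s ⊆ Set.Icc (sInf s) (sSup s) := subset_Icc_csInf_csSup hb ha
  refine le_antisymm ?_ ?_
  · calc volume s ≤ volume (Set.Icc (sInf s) (sSup s)) := measure_mono h2
      _ = ENNReal.ofReal (sSup s - sInf s) := Real.volume_Icc
  · calc ENNReal.ofReal (sSup s - sInf s) = volume (Set.Ioo (sInf s) (sSup s)) :=
        Real.volume_Ioo.symm
      _ ≤ volume s := measure_mono h1

section Main

variable {n : ℕ} {D : Set (EuclideanSpace ℝ (Fin n))}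

/-- Parameter set of the chord through `p` in direction `v`. -/
def chordSet (D : Set (EuclideanSpace ℝ (Fin n))) (p v : EuclideanSpace ℝ (Fin n)) : Set ℝ :=
  {t : ℝ | p + t • v ∈ D}

lemma chordSet_convex (hConv : Convex ℝ D) (p v : EuclideanSpace ℝ (Fin n)) :
    Convex ℝ (chordSet D p v) := by
  intro x hx y hy a b ha hb hab
  have key : p + (a * x + b * y) • v = a • (p + x • v) + b • (p + y • v) := by
    have h1 : a • (p + x • v) + b • (p + y • v) = (a + b) • p + (a * x + b * y) • v := by
      module
    rw [h1, hab, one_smul]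
  show p + (a • x + b • y) • v ∈ D
  simp only [smul_eq_mul] at *
  rw [key]
  exact hConv hx hy ha hb hab

lemma chordSet_bounded (hBdd : Bornology.IsBounded D) (p : EuclideanSpace ℝ (Fin n))
    {v : EuclideanSpace ℝ (Fin n)} (hv : ‖v‖ = 1) :
    Bornology.IsBounded (chordSet D p v) := by
  obtain ⟨C, hC⟩ := hBdd.subset_closedBall 0
  refine (Metric.isBounded_Icc (-(C + ‖p‖)) (C + ‖p‖)).subset ?_
  intro t ht
  have h1 : ‖p + t • v‖ ≤ C := by simpa using hC ht
  have h2 : |t| ≤ C + ‖p‖ := by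
    have h3 : ‖t • v‖ ≤ ‖p + t • v‖ + ‖p‖ := by
      have := norm_sub_le (p + t • v) p
      simpa using this
    rw [norm_smul, hv, mul_one, Real.norm_eq_abs] at h3
    linarith
  exact abs_le.mp h2

lemma segLen_eq (hConv : Convex ℝ D) (hBdd : Bornology.IsBounded D)
    {p : EuclideanSpace ℝ (Fin n)} (hp : p ∈ D) {v : EuclideanSpace ℝ (Fin n)}
    (hv : ‖v‖ = 1) :
    segLen D p v = sSup (chordSet D p v) - sInf (chordSet D p v) := by
  have h0 : (0 : ℝ) ∈ chordSet D p v := by simpa [chordSet] using hp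
  have hcc : connectedComponentIn {t : ℝ | p + t • v ∈ D} 0 = chordSet D p v :=
    (chordSet_convex hConv p v).isPreconnected.connectedComponentIn h0
  have hne : (chordSet D p v).Nonempty := ⟨0, h0⟩
  have hbd := chordSet_bounded hBdd p hv
  have hle : sInf (chordSet D p v) ≤ sSup (chordSet D p v) :=
    (csInf_le hbd.bddBelow h0).trans (le_csSup hbd.bddAbove h0)
  rw [segLen, hcc, vol_convex hne (chordSet_convex hConv p v) hbd,
    ENNReal.toReal_ofReal (by linarith)]

lemma combo_le_csSup {A B M : Set ℝ} (hA : A.Nonempty) (hB : B.Nonempty)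
    (hM : BddAbove M) {s t : ℝ} (hs : 0 < s) (ht : 0 < t)
    (h : ∀ a ∈ A, ∀ b ∈ B, s * a + t * b ∈ M) :
    s * sSup A + t * sSup B ≤ sSup M := by
  have key : ∀ a ∈ A, ∀ b ∈ B, s * a + t * b ≤ sSup M :=
    fun a ha b hb => le_csSup hM (h a ha b hb)
  have hA' : sSup A ≤ (sSup M - t * sSup B) / s := by
    refine csSup_le hA fun a ha => ?_
    rw [le_div_iff₀ hs]
    have hB' : sSup B ≤ (sSup M - a * s) / t := by
      refine csSup_le hB fun b hb => ?_
      rw [le_div_iff₀ ht]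
      linarith [key a ha b hb, mul_comm b t, mul_comm a s]
    have h4 := (le_div_iff₀ ht).mp hB'
    linarith [mul_comm (sSup B) t]
  have h5 := (le_div_iff₀ hs).mp hA'
  linarith [mul_comm (sSup A) s]

lemma csInf_le_combo {A B M : Set ℝ} (hA : A.Nonempty) (hB : B.Nonempty)
    (hM : BddBelow M) {s t : ℝ} (hs : 0 < s) (ht : 0 < t)
    (h : ∀ a ∈ A, ∀ b ∈ B, s * a + t * b ∈ M) :
    sInf M ≤ s * sInf A + t * sInf B := by
  have key : ∀ a ∈ A, ∀ b ∈ B, sInf M ≤ s * a + t * b :=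
    fun a ha b hb => csInf_le hM (h a ha b hb)
  have hA' : (sInf M - t * sInf B) / s ≤ sInf A := by
    refine le_csInf hA fun a ha => ?_
    rw [div_le_iff₀ hs]
    have hB' : (sInf M - a * s) / t ≤ sInf B := by
      refine le_csInf hB fun b hb => ?_
      rw [div_le_iff₀ ht]
      linarith [key a ha b hb, mul_comm b t, mul_comm a s]
    have h4 := (div_le_iff₀ ht).mp hB'
    linarith [mul_comm (sInf B) t]
  have h5 := (div_le_iff₀ hs).mp hA'
  linarith [mul_comm (sInf A) s]

lemma segLen_concave (hConv : Convex ℝ D) (hBdd : Bornology.IsBounded D)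
    {v : EuclideanSpace ℝ (Fin n)} (hv : ‖v‖ = 1) :
    ConcaveOn ℝ D (fun p => segLen D p v) := by
  refine ⟨hConv, fun p hp q hq a b ha hb hab => ?_⟩
  rcases ha.eq_or_lt with rfl | ha'
  · have hb1 : b = 1 := by linarith
    subst hb1; simp
  rcases hb.eq_or_lt with rfl | hb'
  · have ha1 : a = 1 := by linarith
    subst ha1; simp
  have hm : a • p + b • q ∈ D := hConv hp hq ha hb hab
  have h0p : (0 : ℝ) ∈ chordSet D p v := by simpa [chordSet] using hp
  have h0q : (0 : ℝ) ∈ chordSet D q v := by simpa [chordSet] using hq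
  have hAne : (chordSet D p v).Nonempty := ⟨0, h0p⟩
  have hBne : (chordSet D q v).Nonempty := ⟨0, h0q⟩
  have hAbd := chordSet_bounded hBdd p hv
  have hBbd := chordSet_bounded hBdd q hv
  have hMbd := chordSet_bounded hBdd (a • p + b • q) hv
  have hmem : ∀ x ∈ chordSet D p v, ∀ y ∈ chordSet D q v,
      a * x + b * y ∈ chordSet D (a • p + b • q) v := by
    intro x hx y hy
    show a • p + b • q + (a * x + b * y) • v ∈ D
    have hkey : a • p + b • q + (a * x + b * y) • v
        = a • (p + x • v) + b • (q + y • v) := by module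
    rw [hkey]
    exact hConv hx hy ha hb hab
  have h1 := combo_le_csSup hAne hBne hMbd.bddAbove ha' hb' hmem
  have h2 := csInf_le_combo hAne hBne hMbd.bddBelow ha' hb' hmem
  show a • segLen D p v + b • segLen D q v ≤ segLen D (a • p + b • q) v
  rw [segLen_eq hConv hBdd hp hv, segLen_eq hConv hBdd hq hv,
    segLen_eq hConv hBdd hm hv]
  simp only [smul_eq_mul]
  change _ ≤ sSup (chordSet D (a • p + b • q) v) - sInf (chordSet D (a • p + b • q) v)
  nlinarith [h1, h2]

lemma inacc_concave (hConv : Convex ℝ D) (hBdd : Bornology.IsBounded D)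
    (hsph : (sphere (0 : EuclideanSpace ℝ (Fin n)) 1).Nonempty) :
    ConcaveOn ℝ D (inacc D) := by
  refine ⟨hConv, fun p hp q hq a b ha hb hab => ?_⟩
  refine le_csInf (hsph.image _) ?_
  rintro y ⟨v, hv, rfl⟩
  have hv1 : ‖v‖ = 1 := by simpa using hv
  calc a • inacc D p + b • inacc D q
      ≤ a • segLen D p v + b • segLen D q v := by
        simp only [smul_eq_mul]
        gcongr
        · exact inacc_le_segLen D p hv
        · exact inacc_le_segLen D q hv
    _ ≤ segLen D (a • p + b • q) v :=
        (segLen_concave hConv hBdd hv1).2 hp hq ha hb hab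

end Main

/-- for a bounded convex domain `D ⊂ ℝⁿ` with `R = max r` and any
`r ∈ (0, R)`, the intersection of the topological boundary of `D_r = {p ∈ D | r(p) > r}`
with `D` is the level set `{p ∈ D | r(p) = r}`. -/
theorem frontier_Dset_inter {n : ℕ} (D : Set (EuclideanSpace ℝ (Fin n)))
    (hOpen : IsOpen D) (hNe : D.Nonempty) (hBdd : Bornology.IsBounded D)
    (hConv : Convex ℝ D) :
    ∀ r ∈ Set.Ioo (0 : ℝ) (Rmax D),
      frontier {p | p ∈ D ∧ r < inacc D p} ∩ D = {p | p ∈ D ∧ inacc D p = r} := by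
  intro r hr
  obtain ⟨hr0, hrR⟩ := hr
  -- there is a point with inaccessibility above r
  obtain ⟨y, ⟨q, hqD, rfl⟩, hq⟩ := exists_lt_of_lt_csSup (hNe.image _) hrR
  -- the sphere is nonempty
  have hsph : (sphere (0 : EuclideanSpace ℝ (Fin n)) 1).Nonempty := by
    by_contra h
    rw [Set.not_nonempty_iff_eq_empty] at h
    have : inacc D q = 0 := by rw [inacc, h, Set.image_empty, Real.sInf_empty]
    linarith
  have hconc : ConcaveOn ℝ D (inacc D) := inacc_concave hConv hBdd hsph
  have hcont : ContinuousOn (inacc D) D := hconc.continuousOn hOpen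
  set E : Set (EuclideanSpace ℝ (Fin n)) := {p | p ∈ D ∧ r < inacc D p} with hE
  have hEopen : IsOpen E := by
    have : E = D ∩ inacc D ⁻¹' Set.Ioi r := by
      ext x; simp [hE, Set.mem_setOf_eq, and_comm]
    rw [this]
    exact hcont.isOpen_inter_preimage hOpen isOpen_Ioi
  ext p
  simp only [Set.mem_inter_iff, Set.mem_setOf_eq]
  constructor
  · rintro ⟨hpf, hpD⟩
    refine ⟨hpD, ?_⟩
    rw [hEopen.frontier_eq] at hpf
    obtain ⟨hpcl, hpnotE⟩ := hpf
    have hple : inacc D p ≤ r := by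
      by_contra h
      exact hpnotE ⟨hpD, lt_of_not_ge h⟩
    rcases hple.lt_or_eq with hlt | heq
    · exfalso
      -- the set where inacc < r is an open neighborhood of p disjoint from E
      have hU : IsOpen (D ∩ inacc D ⁻¹' Set.Iio r) :=
        hcont.isOpen_inter_preimage hOpen isOpen_Iio
      have hpU : p ∈ D ∩ inacc D ⁻¹' Set.Iio r := ⟨hpD, hlt⟩
      have hdisj : (D ∩ inacc D ⁻¹' Set.Iio r) ∩ E = ∅ := by
        ext x
        simp only [Set.mem_inter_iff, Set.mem_preimage, Set.mem_Iio, Set.mem_setOf_eq,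
          Set.mem_empty_iff_false, iff_false, hE]
        rintro ⟨⟨-, h1⟩, -, h2⟩
        linarith
      have := mem_closure_iff.mp hpcl _ hU hpU
      rw [Set.inter_comm] at hdisj
      rw [Set.inter_comm] at this
      exact this.ne_empty hdisj
    · exact heq
  · rintro ⟨hpD, hpr⟩
    refine ⟨?_, hpD⟩
    have hpnotE : p ∉ E := by
      intro hpE
      exact absurd hpr (ne_of_gt hpE.2)
    -- p is a limit of points of E along the segment towards q
    have hpcl : p ∈ closure E := by
      have hseq : Filter.Tendsto (fun t : ℝ => (1 - t) • p + t • q) (nhdsWithin 0 (Set.Ioi 0))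
          (nhds p) := by
        have : Filter.Tendsto (fun t : ℝ => (1 - t) • p + t • q) (nhds 0) (nhds p) := by
          have hc : Continuous (fun t : ℝ => (1 - t) • p + t • q) := by continuity
          have : (fun t : ℝ => (1 - t) • p + t • q) 0 = p := by simp
          simpa [this] using hc.tendsto 0
        exact this.mono_left nhdsWithin_le_nhds
      refine mem_closure_of_tendsto hseq ?_
      have hlt1 : ∀ᶠ t : ℝ in nhdsWithin 0 (Set.Ioi 0), t < 1 :=
        eventually_nhdsWithin_of_eventually_nhds (gt_mem_nhds one_pos)
      filter_upwards [self_mem_nhdsWithin, hlt1] with t ht h1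
      rw [Set.mem_Ioi] at ht
      have ht1 : 0 ≤ 1 - t := by linarith
      have hmem : (1 - t) • p + t • q ∈ D := hConv hpD hqD ht1 ht.le (by ring)
      refine ⟨hmem, ?_⟩
      have := hconc.2 hpD hqD ht1 ht.le (by ring)
      have h2 : (1 - t) • inacc D p + t • inacc D q > r := by
        simp only [smul_eq_mul, hpr]
        nlinarith
      calc r < (1 - t) • inacc D p + t • inacc D q := h2
        _ ≤ inacc D ((1 - t) • p + t • q) := this
    rw [hEopen.frontier_eq]
    exact ⟨hpcl, hpnotE⟩
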